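/- In the Lorentzian pointwise setting of a spacelike codimension-2 immersion with null basis {k, ℓ} of W, define 𝓑 = −(A_k ∘ A_ℓ + A_ℓ ∘ A_k) and 𝓙 = −(Ã_k ∘ Ã_ℓ + Ã_ℓ ∘ Ã_k), and fix the Hodge dual ⋆ via the alternating form ω normalized by ω(k, ℓ) = 1. Assume H ≠ 0 and that the immersion is not totally umbilical (h̃ ≠ 0). Then the following three conditions are equivalent: (1) 𝓑 − 𝓙 = 0; (2) Ã_H = 0 and A_{⋆H} = 0 (the immersion is both pseudo-umbilical and ortho-umbilical); (3) 𝓑 = 0 and 𝓙 = 0. Moreover, if any of them holds, then ḡ(H, H) = 0. -/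

import Mathlib

open scoped RealInnerProductSpace

theorem stmt18
    {n : ℕ} (hn : 1 ≤ n)
    {V : Type*} [NormedAddCommGroup V] [InnerProductSpace ℝ V] [FiniteDimensional ℝ V]
    (hV : Module.finrank ℝ V = n)
    {W : Type*} [AddCommGroup W] [Module ℝ W] [FiniteDimensional ℝ W]
    (hW : Module.finrank ℝ W = 2)
    (gbar : W →ₗ[ℝ] W →ₗ[ℝ] ℝ)
    (hgsymm : ∀ ξ η : W, gbar ξ η = gbar η ξ)
    (hgnd : ∀ ξ : W, (∀ η : W, gbar ξ η = 0) → ξ = 0)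
    (h : V →ₗ[ℝ] V →ₗ[ℝ] W) (hsymm : ∀ X Y : V, h X Y = h Y X)
    (A : W →ₗ[ℝ] V →ₗ[ℝ] V)
    (hAsa : ∀ (ξ : W) (X Y : V), ⟪A ξ X, Y⟫ = ⟪X, A ξ Y⟫)
    (hAh : ∀ (ξ : W) (X Y : V), ⟪A ξ X, Y⟫ = gbar (h X Y) ξ)
    (H : W) (hH : ∀ ξ : W, gbar H ξ = (LinearMap.trace ℝ V (A ξ)) / (n : ℝ))
    (ht : V → V → W) (hht : ∀ X Y : V, ht X Y = h X Y - ⟪X, Y⟫ • H)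
    (At : W → (V →ₗ[ℝ] V))
    (hAt : ∀ ξ : W, At ξ = A ξ - ((LinearMap.trace ℝ V (A ξ)) / (n : ℝ)) • (LinearMap.id : V →ₗ[ℝ] V))
    (k ℓ : W) (hkk : gbar k k = 0) (hll : gbar ℓ ℓ = 0) (hkl : gbar k ℓ = -1)
    (ω : W →ₗ[ℝ] W →ₗ[ℝ] ℝ) (hωalt : ∀ ξ : W, ω ξ ξ = 0) (hωkl : ω k ℓ = 1)
    (sd : W → W) (hsd : ∀ ξ η : W, gbar (sd ξ) η = ω ξ η)
    (B J : V →ₗ[ℝ] V)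
    (hB : B = -(A k ∘ₗ A ℓ + A ℓ ∘ₗ A k))
    (hJ : J = -(At k ∘ₗ At ℓ + At ℓ ∘ₗ At k))
    (hHne : H ≠ 0) (htne : ¬ ∀ X Y : V, ht X Y = 0) :
    (B - J = 0 ↔ (At H = 0 ∧ A (sd H) = 0)) ∧
      ((At H = 0 ∧ A (sd H) = 0) ↔ (B = 0 ∧ J = 0)) ∧
      (B - J = 0 → gbar H H = 0) := by
  have hn0 : (n : ℝ) ≠ 0 := Nat.cast_ne_zero.mpr (by omega)
  set a : ℝ := LinearMap.trace ℝ V (A k) / (n : ℝ) with ha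
  set b : ℝ := LinearMap.trace ℝ V (A ℓ) / (n : ℝ) with hb
  have hlk : gbar ℓ k = -1 := by rw [hgsymm ℓ k, hkl]
  -- ω ℓ k = -1
  have hωlk : ω ℓ k = -1 := by
    have := hωalt (k + ℓ)
    simp only [map_add, LinearMap.add_apply] at this
    rw [hωalt k, hωalt ℓ, hωkl] at this
    linarith
  -- spanning
  have hind : LinearIndependent ℝ ![k, ℓ] := by
    rw [LinearIndependent.pair_iff]
    intro s t hst
    have h1 := congrArg (fun w => gbar w ℓ) hst
    have h2 := congrArg (fun w => gbar w k) hst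
    simp only [map_add, map_smul, LinearMap.add_apply, LinearMap.smul_apply,
      smul_eq_mul, map_zero, LinearMap.zero_apply] at h1 h2
    rw [hkl, hll] at h1
    rw [hkk, hlk] at h2
    constructor <;> linarith
  have hspan : ∀ η : W, ∃ c d : ℝ, η = c • k + d • ℓ := by
    intro η
    have h1 : Submodule.span ℝ ({k, ℓ} : Set W) = ⊤ := by
      apply Submodule.eq_top_of_finrank_eq
      rw [hW]
      have h2 := finrank_span_eq_card hind
      have h3 : Set.range ![k, ℓ] = ({k, ℓ} : Set W) := by
        simp [Matrix.range_cons, Matrix.range_empty, Set.pair_comm]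
      rw [h3] at h2
      rw [h2]; rfl

    have : η ∈ Submodule.span ℝ ({k, ℓ} : Set W) := by rw [h1]; trivial
    obtain ⟨c, d, hcd⟩ := Submodule.mem_span_pair.mp this
    exact ⟨c, d, hcd.symm⟩
  have nd2 : ∀ ξ : W, gbar ξ k = 0 → gbar ξ ℓ = 0 → ξ = 0 := by
    intro ξ h1 h2
    apply hgnd
    intro η
    obtain ⟨c, d, rfl⟩ := hspan η
    simp only [map_add, map_smul, smul_eq_mul, h1, h2]
    ring
  have hHk : gbar H k = a := hH k
  have hHl : gbar H ℓ = b := hH ℓ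
  -- decomposition of H
  have hHdec : H = (-b) • k + (-a) • ℓ := by
    have h0 : H - ((-b) • k + (-a) • ℓ) = 0 := by
      apply nd2
      · simp only [map_sub, map_add, map_smul, LinearMap.sub_apply, LinearMap.add_apply,
          LinearMap.smul_apply, smul_eq_mul, hHk, hkk, hlk]
        ring
      · simp only [map_sub, map_add, map_smul, LinearMap.sub_apply, LinearMap.add_apply,
          LinearMap.smul_apply, smul_eq_mul, hHl, hkl, hll]
        ring
    linear_combination (norm := module) h0
  -- decomposition of sd H
  have hsdH : sd H = b • k + (-a) • ℓ := by
    have h0 : sd H - (b • k + (-a) • ℓ) = 0 := by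
      apply nd2
      · have h1 : gbar (sd H) k = a := by
          rw [hsd, hHdec]
          simp only [map_add, map_smul, LinearMap.add_apply, LinearMap.smul_apply, smul_eq_mul,
            hωalt k, hωlk]
          ring
        simp only [map_sub, map_add, map_smul, LinearMap.sub_apply, LinearMap.add_apply,
          LinearMap.smul_apply, smul_eq_mul, h1, hkk, hlk]
        ring
      · have h1 : gbar (sd H) ℓ = -b := by
          rw [hsd, hHdec]
          simp only [map_add, map_smul, LinearMap.add_apply, LinearMap.smul_apply, smul_eq_mul,
            hωalt ℓ, hωkl]
          ring
        simp only [map_sub, map_add, map_smul, LinearMap.sub_apply, LinearMap.add_apply,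
          LinearMap.smul_apply, smul_eq_mul, h1, hkl, hll]
        ring
    linear_combination (norm := module) h0
  have ghh : gbar H H = -(2 * (a * b)) := by
    conv_lhs => rw [hHdec]
    simp only [map_add, map_smul, LinearMap.add_apply, LinearMap.smul_apply, smul_eq_mul,
      hkk, hll, hkl, hlk, hHk, hHl]
    ring
  have hAtk : At k = A k - a • (LinearMap.id : V →ₗ[ℝ] V) := hAt k
  have hAtl : At ℓ = A ℓ - b • (LinearMap.id : V →ₗ[ℝ] V) := hAt ℓ
  have hAH : A H = (-b) • A k + (-a) • A ℓ := by
    conv_lhs => rw [hHdec]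
    simp [map_add, map_smul]
  have htrAH : LinearMap.trace ℝ V (A H) / (n : ℝ) = -(2 * (a * b)) := by
    rw [← hH H, ghh]
  have hAtH : At H = (-b) • A k + (-a) • A ℓ + (2 * (a * b)) • (LinearMap.id : V →ₗ[ℝ] V) := by
    rw [hAt H, htrAH, hAH]
    module
  have hAsdH : A (sd H) = b • A k + (-a) • A ℓ := by
    rw [hsdH]
    simp [map_add, map_smul]
  -- expansion of B - J
  have hBJ : B - J = (-(2 * b)) • A k + (-(2 * a)) • A ℓ
      + (2 * (a * b)) • (LinearMap.id : V →ₗ[ℝ] V) := by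
    rw [hB, hJ, hAtk, hAtl]
    simp only [LinearMap.sub_comp, LinearMap.comp_sub, LinearMap.smul_comp, LinearMap.comp_smul,
      LinearMap.id_comp, LinearMap.comp_id, smul_smul]
    module
  -- traces
  have htrid : LinearMap.trace ℝ V (LinearMap.id : V →ₗ[ℝ] V) = (n : ℝ) := by
    rw [LinearMap.trace_id, hV]
  have htrk : LinearMap.trace ℝ V (A k) = a * n := by
    rw [ha, div_mul_cancel₀ _ hn0]
  have htrl : LinearMap.trace ℝ V (A ℓ) = b * n := by
    rw [hb, div_mul_cancel₀ _ hn0]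
  -- non-umbilical consequence
  have humb : At k = 0 → At ℓ = 0 → False := by
    intro h1 h2
    apply htne
    intro X Y
    have hk1 : A k = a • (LinearMap.id : V →ₗ[ℝ] V) := by
      have := hAtk
      rw [h1] at this
      linear_combination (norm := module) -this
    have hl1 : A ℓ = b • (LinearMap.id : V →ₗ[ℝ] V) := by
      have := hAtl
      rw [h2] at this
      linear_combination (norm := module) -this
    apply nd2
    · rw [hht]
      simp only [map_sub, map_smul, LinearMap.sub_apply, LinearMap.smul_apply, smul_eq_mul, hHk]
      rw [← hAh k X Y, hk1]
      simp [real_inner_smul_left]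
      ring
    · rw [hht]
      simp only [map_sub, map_smul, LinearMap.sub_apply, LinearMap.smul_apply, smul_eq_mul, hHl]
      rw [← hAh ℓ X Y, hl1]
      simp [real_inner_smul_left]
      ring
  have hab_ne : ¬ (a = 0 ∧ b = 0) := by
    rintro ⟨h1, h2⟩
    apply hHne
    rw [hHdec, h1, h2]
    simp
  -- main implication: from B - J = 0 derive everything
  have main : B - J = 0 → (At H = 0 ∧ A (sd H) = 0) ∧ (B = 0 ∧ J = 0) ∧ gbar H H = 0 := by
    intro h1
    have heq : (-(2 * b)) • A k + (-(2 * a)) • A ℓ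
        + (2 * (a * b)) • (LinearMap.id : V →ₗ[ℝ] V) = 0 := by
      rw [← hBJ, h1]
    -- trace gives a*b = 0
    have htr := congrArg (LinearMap.trace ℝ V) heq
    simp only [map_add, map_smul, smul_eq_mul, map_zero, htrid, htrk, htrl] at htr
    have hab : a * b = 0 := by
      have : -(2 * (a * b)) * (n : ℝ) = 0 := by linarith [htr]
      have h2 : a * b = 0 ∨ (n : ℝ) = 0 := by
        rcases mul_eq_zero.mp this with h3 | h3
        · left; linarith
        · right; exact h3
      tauto
    rcases mul_eq_zero.mp hab with ha0 | hb0
    · -- a = 0, so b ≠ 0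
      have hbne : b ≠ 0 := fun hb0 => hab_ne ⟨ha0, hb0⟩
      have hPk : A k = 0 := by
        rw [ha0] at heq
        simp only [neg_zero, zero_smul, mul_zero, zero_mul, add_zero, zero_add] at heq
        have h2 : (-(2 * b)) • A k = 0 := by
          linear_combination (norm := module) heq
        rcases smul_eq_zero.mp h2 with h3 | h3
        · exact absurd (by linarith [h3] : b = 0) hbne
        · exact h3
      have hAtk0 : At k = 0 := by rw [hAtk, hPk, ha0]; simp
      refine ⟨⟨?_, ?_⟩, ⟨?_, ?_⟩, ?_⟩
      · rw [hAtH, hPk, ha0]; simp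
      · rw [hAsdH, hPk, ha0]; simp
      · rw [hB, hPk]; simp
      · rw [hJ, hAtk0]; simp
      · rw [ghh, hab]; ring
    · -- b = 0, so a ≠ 0
      have hane : a ≠ 0 := fun ha0 => hab_ne ⟨ha0, hb0⟩
      have hPl : A ℓ = 0 := by
        rw [hb0] at heq
        simp only [mul_zero, neg_zero, zero_smul, zero_mul, add_zero, zero_add] at heq
        have h2 : (-(2 * a)) • A ℓ = 0 := by
          linear_combination (norm := module) heq
        rcases smul_eq_zero.mp h2 with h3 | h3
        · exact absurd (by linarith [h3] : a = 0) hane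
        · exact h3
      have hAtl0 : At ℓ = 0 := by rw [hAtl, hPl, hb0]; simp
      refine ⟨⟨?_, ?_⟩, ⟨?_, ?_⟩, ?_⟩
      · rw [hAtH, hPl, hb0]; simp
      · rw [hAsdH, hPl, hb0]; simp
      · rw [hB, hPl]; simp
      · rw [hJ, hAtl0]; simp
      · rw [ghh, hab]; ring
  -- converse: (2) implies (1)
  have c2c1 : (At H = 0 ∧ A (sd H) = 0) → B - J = 0 := by
    rintro ⟨h1, h2⟩
    rw [hAtH] at h1
    rw [hAsdH] at h2
    have e3 : a • At ℓ = 0 := by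
      rw [hAtl]
      linear_combination (norm := module) (-(1/2) : ℝ) • h1 + (-(1/2) : ℝ) • h2
    have e4 : b • At k = 0 := by
      rw [hAtk]
      linear_combination (norm := module) (-(1/2) : ℝ) • h1 + ((1/2) : ℝ) • h2
    by_cases ha0 : a = 0
    · have hbne : b ≠ 0 := fun hb0 => hab_ne ⟨ha0, hb0⟩
      have hAtk0 : At k = 0 := by
        rcases smul_eq_zero.mp e4 with h3 | h3
        · exact absurd h3 hbne
        · exact h3
      have hPk : A k = 0 := by
        have := hAtk
        rw [hAtk0, ha0] at this
        linear_combination (norm := module) -this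
      rw [hBJ, hPk, ha0]
      simp
    · have hAtl0 : At ℓ = 0 := by
        rcases smul_eq_zero.mp e3 with h3 | h3
        · exact absurd h3 ha0
        · exact h3
      have hb0 : b = 0 := by
        by_contra hb0
        exact humb (by rcases smul_eq_zero.mp e4 with h3 | h3; exact absurd h3 hb0; exact h3) hAtl0
      have hPl : A ℓ = 0 := by
        have := hAtl
        rw [hAtl0, hb0] at this
        linear_combination (norm := module) -this
      rw [hBJ, hPl, hb0]
      simp
  refine ⟨⟨fun h1 => (main h1).1, c2c1⟩, ⟨fun h2 => (main (c2c1 h2)).2.1, fun h3 => ?_⟩,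
    fun h1 => (main h1).2.2⟩
  exact (main (by rw [h3.1, h3.2, sub_zero])).1
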